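/- For α > 1, the second derivative of the margin-based α-loss, l^{α''}(z) = e^z(α e^z - α + 1)/(α (e^{-z}+1)^{-1/α}(e^z+1)^3), is strictly negative for z < log((α-1)/α) and strictly positive for z > log((α-1)/α); in particular the loss is not convex. -/

import Mathlib

noncomputable def sigmoid (z : ℝ) : ℝ := 1 / (1 + Real.exp (-z))

noncomputable def alphaLoss (α z : ℝ) : ℝ :=
  (α / (α - 1)) * (1 - sigmoid z ^ (1 - 1 / α))

noncomputable def alphaLossSecondDeriv (α z : ℝ) : ℝ :=
  Real.exp z * (α * Real.exp z - α + 1) /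
    (α * (Real.exp (-z) + 1) ^ (-(1 / α)) * (Real.exp z + 1) ^ 3)

lemma sigmoid_pos (z : ℝ) : 0 < sigmoid z := by
  unfold sigmoid
  positivity

lemma denom_pos (α z : ℝ) (hα : 1 < α) :
    0 < α * (Real.exp (-z) + 1) ^ (-(1 / α)) * (Real.exp z + 1) ^ 3 := by
  have h1 : (0:ℝ) < Real.exp (-z) + 1 := by positivity
  have h2 : (0:ℝ) < Real.exp z + 1 := by positivity
  have := Real.rpow_pos_of_pos h1 (-(1 / α))
  positivity

lemma alphaLoss_lt (α z : ℝ) (hα : 1 < α) : alphaLoss α z < α / (α - 1) := by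
  have hc : 0 < α / (α - 1) := by
    apply div_pos (by linarith) (by linarith)
  have hp : (0:ℝ) < sigmoid z ^ (1 - 1 / α) := Real.rpow_pos_of_pos (sigmoid_pos z) _
  unfold alphaLoss
  nlinarith

lemma alphaLoss_strict : ∀ (α : ℝ), 1 < α → alphaLoss α 1 < alphaLoss α 0 := by
  intro α hα
  have hc : 0 < α / (α - 1) := div_pos (by linarith) (by linarith)
  have hp : 0 < 1 - 1 / α := by
    have : 1 / α < 1 := by
      rw [div_lt_one (by linarith)]; exact hα
    linarith
  have hs : sigmoid 0 < sigmoid 1 := by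
    unfold sigmoid
    apply div_lt_div_of_pos_left one_pos (by positivity)
    have : Real.exp (-1 : ℝ) < Real.exp (-0 : ℝ) := Real.exp_lt_exp.2 (by norm_num)
    simpa using this
  have hrp : sigmoid 0 ^ (1 - 1 / α) < sigmoid 1 ^ (1 - 1 / α) :=
    Real.rpow_lt_rpow (sigmoid_pos 0).le hs hp
  unfold alphaLoss
  nlinarith

theorem alphaLoss_not_convex (α : ℝ) (hα : 1 < α) :
    (∀ z : ℝ, z < Real.log ((α - 1) / α) → alphaLossSecondDeriv α z < 0) ∧
    (∀ z : ℝ, z > Real.log ((α - 1) / α) → 0 < alphaLossSecondDeriv α z) ∧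
    ¬ ConvexOn ℝ Set.univ (fun z => alphaLoss α z) := by
  have hαpos : (0:ℝ) < α := by linarith
  have hratio : (0:ℝ) < (α - 1) / α := div_pos (by linarith) hαpos
  refine ⟨?_, ?_, ?_⟩
  · intro z hz
    have hez : Real.exp z < (α - 1) / α := by
      have := Real.exp_lt_exp.2 hz
      rwa [Real.exp_log hratio] at this
    have hnum : Real.exp z * (α * Real.exp z - α + 1) < 0 := by
      have h1 : α * Real.exp z < α - 1 := by
        have := (lt_div_iff₀ hαpos).1 hez
        nlinarith
      have h2 : (0:ℝ) < Real.exp z := Real.exp_pos z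
      nlinarith
    exact div_neg_of_neg_of_pos hnum (denom_pos α z hα)
  · intro z hz
    have hez : (α - 1) / α < Real.exp z := by
      have := Real.exp_lt_exp.2 hz
      rwa [Real.exp_log hratio] at this
    have hnum : 0 < Real.exp z * (α * Real.exp z - α + 1) := by
      have h1 : α - 1 < α * Real.exp z := by
        have := (div_lt_iff₀ hαpos).1 hez
        nlinarith
      have h2 : (0:ℝ) < Real.exp z := Real.exp_pos z
      nlinarith
    exact div_pos hnum (denom_pos α z hα)
  · intro hconv
    set c : ℝ := α / (α - 1) with hc
    set d : ℝ := alphaLoss α 0 - alphaLoss α 1 with hd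
    have hdpos : 0 < d := by
      have := alphaLoss_strict α hα
      simp [hd]; linarith
    set t : ℝ := max 2 ((c - alphaLoss α 1) / d + 1) with ht
    have ht2 : (2:ℝ) ≤ t := le_max_left _ _
    have htpos : (0:ℝ) < t := by linarith
    have hab : (1 - 1/t) + 1/t = 1 := by ring
    have ha : (0:ℝ) ≤ 1 - 1/t := by
      have : 1/t ≤ 1/2 := by
        apply one_div_le_one_div_of_le (by norm_num) ht2
      linarith
    have hb : (0:ℝ) ≤ 1/t := by positivity
    have hkey := hconv.2 (Set.mem_univ (1:ℝ)) (Set.mem_univ (1 - t)) ha hb hab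
    have hpt : (1 - 1/t) • (1:ℝ) + (1/t) • (1 - t) = 0 := by
      simp only [smul_eq_mul]
      field_simp
      ring
    rw [hpt] at hkey
    simp only [smul_eq_mul] at hkey
    -- hkey : alphaLoss α 0 ≤ (1 - 1/t) * alphaLoss α 1 + (1/t) * alphaLoss α (1 - t)
    have hbig : c < alphaLoss α (1 - t) := by
      have htge : (c - alphaLoss α 1) / d + 1 ≤ t := le_max_right _ _
      have h1 : c - alphaLoss α 1 < t * d := by
        rw [div_add' _ _ _ (ne_of_gt hdpos)] at htge
        rw [div_le_iff₀ hdpos] at htge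
        nlinarith
      -- from hkey: t * alphaLoss α 0 ≤ (t - 1) * alphaLoss α 1 + alphaLoss α (1-t)
      have h2 : t * alphaLoss α 0 ≤ (t - 1) * alphaLoss α 1 + alphaLoss α (1 - t) := by
        have := mul_le_mul_of_nonneg_left hkey (le_of_lt htpos)
        field_simp at this
        nlinarith [this]
      have : t * d ≤ alphaLoss α (1 - t) - alphaLoss α 1 := by
        simp only [hd]; nlinarith
      linarith
    have := alphaLoss_lt α (1 - t) hα
    rw [← hc] at this
    linarith
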